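/- Let n ≥ 1 and let P be an n×n complex matrix satisfying P² = I. Let Z = diag(1, −1) and let m = (1/√2)(e₀ + e^{iπ/4} e₁) ∈ ℂ² be the magic state. For any v ∈ ℂⁿ, let w⁻ = (1/2)(I_{2n} − P ⊗ Z)(v ⊗ m) ∈ ℂⁿ ⊗ ℂ² (the post-measurement state for outcome −1 of measuring P ⊗ Z), and define u⁻ ∈ ℂⁿ by u⁻_i = (w⁻_{(i,0)} + w⁻_{(i,1)})/√2. Then applying the Clifford correction e^{−iπP/4} = cos(π/4) · I − i sin(π/4) · P gives (cos(π/4) I − i sin(π/4) P) u⁻ = (e^{iπ/8}/2) · (cos(π/8) · v − i · sin(π/8) · (P v)); that is, after the outcome-conditioned π/4 correction, the data register again carries e^{−iπP/8} v up to normalization and a global phase. -/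
import Mathlib


open Matrix Kronecker

/-- Correctness of the −1-outcome branch of the circuit implementing the π/8 Pauli
rotation via measurement of `P ⊗ Z` with a magic-state ancilla, followed by the
measurement-outcome-controlled Clifford correction `e^{−iπP/4}`. -/
theorem magic_state_rotation_minus_outcome
    (n : ℕ) (hn : 1 ≤ n) (P : Matrix (Fin n) (Fin n) ℂ) (hP : P * P = 1)
    (v : Fin n → ℂ) :
    let Z : Matrix (Fin 2) (Fin 2) ℂ := !![1, 0; 0, -1]
    let m : Fin 2 → ℂ :=
      ![(Real.sqrt 2 : ℂ)⁻¹, Complex.exp (Real.pi / 4 * Complex.I) * (Real.sqrt 2 : ℂ)⁻¹]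
    let vm : Fin n × Fin 2 → ℂ := fun q => v q.1 * m q.2
    let wminus : Fin n × Fin 2 → ℂ :=
      ((1 : ℂ) / 2) • ((1 : Matrix (Fin n × Fin 2) (Fin n × Fin 2) ℂ) - P ⊗ₖ Z).mulVec vm
    let uminus : Fin n → ℂ := fun i => (wminus (i, 0) + wminus (i, 1)) / (Real.sqrt 2 : ℂ)
    let correction : Matrix (Fin n) (Fin n) ℂ :=
      (Real.cos (Real.pi / 4) : ℂ) • (1 : Matrix (Fin n) (Fin n) ℂ)
        - (Complex.I * (Real.sin (Real.pi / 4) : ℂ)) • P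
    ∀ i, correction.mulVec uminus i = Complex.exp (Real.pi / 8 * Complex.I) / 2 *
      ((Real.cos (Real.pi / 8) : ℂ) * v i
        - Complex.I * (Real.sin (Real.pi / 8) : ℂ) * P.mulVec v i) := by
  intro Z m vm wminus uminus correction i
  set r : ℂ := (Real.sqrt 2 : ℂ) with hrdef
  set e : ℂ := Complex.exp (Real.pi / 4 * Complex.I) with hedef
  set A : ℂ := (m 0 + m 1) / 2 * r⁻¹ with hA
  set B : ℂ := (m 1 - m 0) / 2 * r⁻¹ with hB
  have hk : ∀ (k : Fin n) (j : Fin 2), (P ⊗ₖ Z).mulVec vm (k, j)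
      = P.mulVec v k * Z.mulVec m j := by
    intro k j
    simp only [Matrix.mulVec, dotProduct, Fintype.sum_prod_type,
      Matrix.kroneckerMap_apply, vm]
    rw [Finset.sum_mul_sum]
    exact Finset.sum_congr rfl fun x _ => Finset.sum_congr rfl fun y _ => by ring
  have hZm0 : Z.mulVec m 0 = m 0 := by
    simp [Z, Matrix.mulVec, dotProduct, Fin.sum_univ_two]
  have hZm1 : Z.mulVec m 1 = -(m 1) := by
    simp [Z, Matrix.mulVec, dotProduct, Fin.sum_univ_two]
  have hu : uminus = A • v + B • P.mulVec v := by
    funext k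
    simp only [uminus, wminus, Pi.smul_apply, Matrix.sub_mulVec, Matrix.one_mulVec,
      Pi.sub_apply, Pi.add_apply, hk, hZm0, hZm1, smul_eq_mul, hA, hB, vm]
    ring
  have hPu : P.mulVec uminus = A • P.mulVec v + B • v := by
    rw [hu, Matrix.mulVec_add, Matrix.mulVec_smul, Matrix.mulVec_smul,
      Matrix.mulVec_mulVec, hP, Matrix.one_mulVec]
  have hcor : correction.mulVec uminus i
      = (Real.cos (Real.pi / 4) : ℂ) * uminus i
        - Complex.I * (Real.sin (Real.pi / 4) : ℂ) * P.mulVec uminus i := by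
    simp [correction, Matrix.sub_mulVec, Matrix.smul_mulVec, Matrix.one_mulVec,
      smul_eq_mul]
  rw [hcor, hPu, hu]
  simp only [Pi.add_apply, Pi.smul_apply, smul_eq_mul]
  -- scalar facts
  set a : ℝ := Real.cos (Real.pi / 8) with ha
  set b : ℝ := Real.sin (Real.pi / 8) with hb
  have habR : a ^ 2 + b ^ 2 = 1 := by
    rw [ha, hb, add_comm]; exact Real.sin_sq_add_cos_sq _
  have hab : (a : ℂ) ^ 2 + (b : ℂ) ^ 2 = 1 := by exact_mod_cast habR
  have hc4R : Real.cos (Real.pi / 4) = a ^ 2 - b ^ 2 := by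
    rw [show Real.pi / 4 = 2 * (Real.pi / 8) by ring, Real.cos_two_mul]
    rw [ha, hb]; nlinarith [Real.sin_sq_add_cos_sq (Real.pi / 8)]
  have hs4R : Real.sin (Real.pi / 4) = 2 * b * a := by
    rw [show Real.pi / 4 = 2 * (Real.pi / 8) by ring, Real.sin_two_mul, ha, hb]
  have hE : Complex.exp ((Real.pi : ℂ) / 8 * Complex.I) = (a : ℂ) + (b : ℂ) * Complex.I := by
    rw [show ((Real.pi : ℂ) / 8) = ((Real.pi / 8 : ℝ) : ℂ) by push_cast; ring,
      Complex.exp_mul_I, ← Complex.ofReal_cos, ← Complex.ofReal_sin, ← ha, ← hb]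
  have he : e = ((a : ℂ) ^ 2 - (b : ℂ) ^ 2) + 2 * (b : ℂ) * (a : ℂ) * Complex.I := by
    rw [hedef, show ((Real.pi : ℂ) / 4) = ((Real.pi / 4 : ℝ) : ℂ) by push_cast; ring,
      Complex.exp_mul_I, ← Complex.ofReal_cos, ← Complex.ofReal_sin, hc4R, hs4R]
    push_cast; ring
  have hr2 : r * r = 2 := by
    rw [hrdef, ← Complex.ofReal_mul, Real.mul_self_sqrt (by norm_num)]
    norm_num
  have hr0 : r ≠ 0 := by
    intro h
    rw [h] at hr2; norm_num at hr2
  have hm0 : m 0 = r⁻¹ := rfl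
  have hm1 : m 1 = e * r⁻¹ := rfl
  have hri : r⁻¹ * r⁻¹ = 1 / 2 := by
    rw [← mul_inv, hr2]; norm_num
  have hA' : A = (a : ℂ) * ((a : ℂ) + (b : ℂ) * Complex.I) / 2 := by
    calc A = (1 + e) / 2 * (r⁻¹ * r⁻¹) := by rw [hA, hm0, hm1]; ring
    _ = (1 + e) / 4 := by rw [hri]; ring
    _ = (a : ℂ) * ((a : ℂ) + (b : ℂ) * Complex.I) / 2 := by
        rw [he]; linear_combination (-1/4 : ℂ) * hab
  have hB' : B = (b : ℂ) * Complex.I * ((a : ℂ) + (b : ℂ) * Complex.I) / 2 := by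
    calc B = (e - 1) / 2 * (r⁻¹ * r⁻¹) := by rw [hB, hm0, hm1]; ring
    _ = (e - 1) / 4 := by rw [hri]; ring
    _ = (b : ℂ) * Complex.I * ((a : ℂ) + (b : ℂ) * Complex.I) / 2 := by
        rw [he]
        linear_combination (1/4 : ℂ) * hab + (-((b:ℂ)^2)/2) * Complex.I_sq
  rw [hE, hA', hB', hc4R, hs4R]
  push_cast
  linear_combination (((a:ℂ) + b * Complex.I) * a / 2 * (v i)
      - ((a:ℂ) + b * Complex.I) * Complex.I * b / 2 * (P.mulVec v i)) * hab
    + (-(((a:ℂ) + b * Complex.I) * a * b ^ 2 * (v i))) * Complex.I_sq
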